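/- Let p > 3 be prime. Then there exists a polynomial Q ∈ ℤ[x,y,z] such that x·y·((x+y+z)^p − x^p − y^p − z^p) − (y+z)·(z+x)·((x+y)^p − x^p − y^p) = p·x·y·z·(x+y)·(y+z)·(z+x)·Q. (Equivalently, the integer polynomial E₃ = ((x+y+z)^p − x^p − y^p − z^p)/(p(x+y)(y+z)(z+x)) differs from E₂ = ((x+y)^p − x^p − y^p)/(p·x·y·(x+y)) by a polynomial in ℤ[x,y,z] all of whose terms are multiples of z.) -/

import Mathlib

open MvPolynomial

private lemma dvd_massage {α : Type*} [CommRing α] {a b a' b' : α}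
    (h : a ∣ b) (e1 : a' = a) (e2 : b' = b) : a' ∣ b' := by rw [e1, e2]; exact h

private lemma not_dvd_of_eval (f g : MvPolynomial (Fin 3) ℤ) (v : Fin 3 → ℤ)
    (h0 : eval v f = 0) (h1 : eval v g ≠ 0) : ¬ f ∣ g := fun h =>
  h1 (zero_dvd_iff.mp (h0 ▸ (eval v).map_dvd h))

private lemma prime_X0 : Prime (X 0 : MvPolynomial (Fin 3) ℤ) := by
  rw [← MulEquiv.prime_iff (MvPolynomial.finSuccEquiv ℤ 2).toMulEquiv]
  have : (MvPolynomial.finSuccEquiv ℤ 2).toMulEquiv (X 0) = Polynomial.X := by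
    simp [MvPolynomial.finSuccEquiv_X_zero]
  rw [this]
  exact Polynomial.prime_X

private lemma prime_aeval (v w : Fin 3 → MvPolynomial (Fin 3) ℤ)
    (h1 : ∀ i, aeval v (w i) = X i) (h2 : ∀ i, aeval w (v i) = X i) :
    Prime (v 0) := by
  let e : MvPolynomial (Fin 3) ℤ ≃ₐ[ℤ] MvPolynomial (Fin 3) ℤ :=
    AlgEquiv.ofAlgHom (aeval v) (aeval w)
      (MvPolynomial.algHom_ext fun i => by simp; exact h1 i)
      (MvPolynomial.algHom_ext fun i => by simp; exact h2 i)
  have h := prime_X0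
  rw [← MulEquiv.prime_iff e.toMulEquiv] at h
  have he : e.toMulEquiv (X 0) = v 0 := by
    show (aeval v) (X 0) = v 0
    simp
  rwa [he] at h

/-- For a prime `p > 3`, there is `Q ∈ ℤ[x,y,z]` with
`x·y·((x+y+z)^p - x^p - y^p - z^p) - (y+z)·(z+x)·((x+y)^p - x^p - y^p)
  = p·x·y·z·(x+y)·(y+z)·(z+x)·Q`;
equivalently `E₃ - E₂ ∈ z·ℤ[x,y,z]`. -/
theorem E3_minus_E2_multiple_of_z
    (p : ℕ) (hp : p.Prime) (hp3 : 3 < p) :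
    ∃ Q : MvPolynomial (Fin 3) ℤ,
      X 0 * X 1 * ((X 0 + X 1 + X 2) ^ p - X 0 ^ p - X 1 ^ p - X 2 ^ p) -
          (X 1 + X 2) * (X 2 + X 0) * ((X 0 + X 1) ^ p - X 0 ^ p - X 1 ^ p) =
        (p : MvPolynomial (Fin 3) ℤ) * X 0 * X 1 * X 2 *
          (X 0 + X 1) * (X 1 + X 2) * (X 2 + X 0) * Q := by
  have hodd : Odd p := hp.odd_of_ne_two (by omega)
  set R := MvPolynomial (Fin 3) ℤ
  set x := (X 0 : R) with hxdef
  set y := (X 1 : R) with hydef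
  set z := (X 2 : R) with hzdef
  set A := (x + y + z) ^ p - x ^ p - y ^ p - z ^ p with hAdef
  set B := (x + y) ^ p - x ^ p - y ^ p with hBdef
  set L := x * y * A - (y + z) * (z + x) * B with hLdef
  -- basic power divisibilities
  have hxp : x ∣ x ^ p := dvd_pow_self x hp.ne_zero
  have hyp : y ∣ y ^ p := dvd_pow_self y hp.ne_zero
  have hzp : z ∣ z ^ p := dvd_pow_self z hp.ne_zero
  -- divisibility facts about B
  have hxB : x ∣ B := by
    have h1 : x ∣ (x + y) ^ p - y ^ p :=
      dvd_massage (sub_dvd_pow_sub_pow (x + y) y p) (by ring) rfl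
    exact dvd_massage (dvd_sub h1 hxp) rfl (by rw [hBdef]; ring)
  have hyB : y ∣ B := by
    have h1 : y ∣ (x + y) ^ p - x ^ p :=
      dvd_massage (sub_dvd_pow_sub_pow (x + y) x p) (by ring) rfl
    exact dvd_massage (dvd_sub h1 hyp) rfl (by rw [hBdef])
  have hxyB : (x + y) ∣ B :=
    dvd_massage (dvd_sub (dvd_pow_self (x + y) hp.ne_zero)
      (hodd.add_dvd_pow_add_pow x y)) rfl (by rw [hBdef]; ring)
  have hpB : (p : R) ∣ B := by
    obtain ⟨s, hs⟩ := exists_add_pow_prime_eq hp (x := x) (y := y)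
    exact ⟨x * y * s, by rw [hBdef]; linear_combination hs⟩
  -- divisibility facts about A
  have hxyA : (x + y) ∣ A := by
    have h1 : (x + y) ∣ (x + y + z) ^ p - z ^ p :=
      dvd_massage (sub_dvd_pow_sub_pow (x + y + z) z p) (by ring) rfl
    exact dvd_massage (dvd_sub h1 (hodd.add_dvd_pow_add_pow x y)) rfl
      (by rw [hAdef]; ring)
  have hyzA : (y + z) ∣ A := by
    have h1 : (y + z) ∣ (x + y + z) ^ p - x ^ p :=
      dvd_massage (sub_dvd_pow_sub_pow (x + y + z) x p) (by ring) rfl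
    exact dvd_massage (dvd_sub h1 (hodd.add_dvd_pow_add_pow y z)) rfl
      (by rw [hAdef]; ring)
  have hzxA : (z + x) ∣ A := by
    have h1 : (z + x) ∣ (x + y + z) ^ p - y ^ p :=
      dvd_massage (sub_dvd_pow_sub_pow (x + y + z) y p) (by ring) rfl
    exact dvd_massage (dvd_sub h1 (hodd.add_dvd_pow_add_pow z x)) rfl
      (by rw [hAdef]; ring)
  have hpA : (p : R) ∣ A := by
    obtain ⟨r, hr⟩ := exists_add_pow_prime_eq hp (x := x + y) (y := z)
    obtain ⟨s, hs⟩ := exists_add_pow_prime_eq hp (x := x) (y := y)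
    exact ⟨(x + y) * z * r + x * y * s, by rw [hAdef]; linear_combination hr + hs⟩
  have hzAB : z ∣ A - B := by
    have h1 : z ∣ (x + y + z) ^ p - (x + y) ^ p :=
      dvd_massage (sub_dvd_pow_sub_pow (x + y + z) (x + y) p) (by ring) rfl
    exact dvd_massage (dvd_sub h1 hzp) rfl (by rw [hAdef, hBdef]; ring)
  -- divisibility facts about L
  have d1 : (p : R) ∣ L := dvd_sub (hpA.mul_left _) (hpB.mul_left _)
  have d2 : x ∣ L := dvd_sub (dvd_mul_of_dvd_left (dvd_mul_right x y) A) (hxB.mul_left _)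
  have d3 : y ∣ L := dvd_sub (dvd_mul_of_dvd_left (dvd_mul_left y x) A) (hyB.mul_left _)
  have d4 : z ∣ L := by
    refine dvd_massage (dvd_sub (hzAB.mul_left (x * y))
      (dvd_mul_of_dvd_left (dvd_mul_right z (x + y + z)) B)) rfl ?_
    rw [hLdef]; ring
  have d5 : (x + y) ∣ L := dvd_sub (hxyA.mul_left _) (hxyB.mul_left _)
  have d6 : (y + z) ∣ L :=
    dvd_sub (hyzA.mul_left _) (dvd_mul_of_dvd_left (dvd_mul_right (y + z) (z + x)) B)
  have d7 : (z + x) ∣ L :=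
    dvd_sub (hzxA.mul_left _) (dvd_mul_of_dvd_left (dvd_mul_left (z + x) (y + z)) B)
  -- primality of the seven factors
  have prp : Prime ((p : R)) := by
    have h : ((p : R)) = C ((p : ℤ)) := by simp
    rw [h, MvPolynomial.prime_C_iff]
    exact Nat.prime_iff_prime_int.mp hp
  have prx : Prime x := prime_X0
  have pry : Prime y := by
    have := prime_aeval ![X 1, X 0, X 2] ![X 1, X 0, X 2]
      (fun i => by fin_cases i <;> simp) (fun i => by fin_cases i <;> simp)
    simpa using this
  have prz : Prime z := by
    have := prime_aeval ![X 2, X 1, X 0] ![X 2, X 1, X 0]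
      (fun i => by fin_cases i <;> simp) (fun i => by fin_cases i <;> simp)
    simpa using this
  have prxy : Prime (x + y) := by
    have := prime_aeval ![X 0 + X 1, X 1, X 2] ![X 0 - X 1, X 1, X 2]
      (fun i => by fin_cases i <;> simp) (fun i => by fin_cases i <;> simp)
    simpa using this
  have pryz : Prime (y + z) := by
    have := prime_aeval ![X 1 + X 2, X 2, X 0] ![X 2, X 0 - X 1, X 1]
      (fun i => by fin_cases i <;> simp) (fun i => by fin_cases i <;> simp)
    simpa using this
  have przx : Prime (z + x) := by
    have := prime_aeval ![X 2 + X 0, X 0, X 1] ![X 1, X 2, X 0 - X 1]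
      (fun i => by fin_cases i <;> simp) (fun i => by fin_cases i <;> simp)
    simpa using this
  have hpne : (p : ℤ) ≠ 0 := by exact_mod_cast hp.ne_zero
  -- extract the factors one at a time
  obtain ⟨L1, e1⟩ := d1
  have d2' : x ∣ (p : R) * L1 := e1 ▸ d2
  obtain ⟨L2, e2⟩ := (prx.dvd_or_dvd d2').resolve_left
    (not_dvd_of_eval _ _ ![0, 1, 1] (by simp [hxdef]) (by simp [hpne, hp.ne_zero]))
  have d3' : y ∣ ((p : R) * x) * L2 := by
    rw [show ((p : R) * x) * L2 = (p : R) * (x * L2) from by ring, ← e2, ← e1]; exact d3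
  obtain ⟨L3, e3⟩ := (pry.dvd_or_dvd d3').resolve_left
    (not_dvd_of_eval _ _ ![1, 0, 1] (by simp [hydef]) (by simp [hxdef, hpne, hp.ne_zero]))
  have d4' : z ∣ ((p : R) * x * y) * L3 := by
    rw [show ((p : R) * x * y) * L3 = (p : R) * (x * (y * L3)) from by ring,
      ← e3, ← e2, ← e1]; exact d4
  obtain ⟨L4, e4⟩ := (prz.dvd_or_dvd d4').resolve_left
    (not_dvd_of_eval _ _ ![1, 1, 0] (by simp [hzdef]) (by simp [hxdef, hydef, hpne, hp.ne_zero]))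
  have d5' : (x + y) ∣ ((p : R) * x * y * z) * L4 := by
    rw [show ((p : R) * x * y * z) * L4 = (p : R) * (x * (y * (z * L4))) from by ring,
      ← e4, ← e3, ← e2, ← e1]; exact d5
  obtain ⟨L5, e5⟩ := (prxy.dvd_or_dvd d5').resolve_left
    (not_dvd_of_eval _ _ ![1, -1, 1] (by simp [hxdef, hydef])
      (by simp [hxdef, hydef, hzdef, hpne, hp.ne_zero]))
  have d6' : (y + z) ∣ ((p : R) * x * y * z * (x + y)) * L5 := by
    rw [show ((p : R) * x * y * z * (x + y)) * L5
        = (p : R) * (x * (y * (z * ((x + y) * L5)))) from by ring,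
      ← e5, ← e4, ← e3, ← e2, ← e1]; exact d6
  obtain ⟨L6, e6⟩ := (pryz.dvd_or_dvd d6').resolve_left
    (not_dvd_of_eval _ _ ![1, 1, -1] (by simp [hydef, hzdef])
      (by simp [hxdef, hydef, hzdef, hpne, hp.ne_zero]))
  have d7' : (z + x) ∣ ((p : R) * x * y * z * (x + y) * (y + z)) * L6 := by
    rw [show ((p : R) * x * y * z * (x + y) * (y + z)) * L6
        = (p : R) * (x * (y * (z * ((x + y) * ((y + z) * L6))))) from by ring,
      ← e6, ← e5, ← e4, ← e3, ← e2, ← e1]; exact d7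
  obtain ⟨L7, e7⟩ := (przx.dvd_or_dvd d7').resolve_left
    (not_dvd_of_eval _ _ ![1, 2, -1] (by simp [hxdef, hzdef])
      (by simp [hxdef, hydef, hzdef, hpne, hp.ne_zero]))
  refine ⟨L7, ?_⟩
  show L = (p : R) * x * y * z * (x + y) * (y + z) * (z + x) * L7
  rw [e1, e2, e3, e4, e5, e6, e7]; ring
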